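/- (Lemma: alternate expression for the multiplicative cost, Lemma 1 of the paper.) Let Γ be a controlled transfer operator, R an operator valued cost, F a Hermitian matrix, and M ≥ 1. For every feedback controller K and every positive semidefinite initial matrix ω̂: ∑ over (y_1,…,y_M) ∈ Y^M of G_0(ω̂) (with controls u_k = K_k(y_1,…,y_k)) equals ∑ over (y_1,…,y_M) ∈ Y^M of (∏_{k=0}^{M−1} p_R(y_{k+1}|u_k, ω̂_k)) · tr(F ω̂_M), where ω̂_0 = ω̂ and ω̂_{k+1} = Λ_{Γ,R}(u_k, y_{k+1}) ω̂_k. That is, J^μ_{ω̂,0}(K) = E^K_{ω̂,0}[⟨ω̂_M, F⟩], the expectation of the terminal pairing along the unnormalized conditional dynamics. -/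

import Mathlib

open Matrix BigOperators
open scoped ComplexOrder

noncomputable section

/-- Complex `n × n` matrices. -/
abbrev Mat (n : ℕ) := Matrix (Fin n) (Fin n) ℂ

/-- Real part of the trace. -/
def trR {n : ℕ} (A : Mat n) : ℝ := A.trace.re

/-- `p_R(y|u,ωh) = tr(Γ(u,y)(R(u)ωh)) / tr(R(u)ωh)` (equal to `0` when the
denominator vanishes, by the junk-value convention of real division). -/
def pR {n : ℕ} {U Y : Type*} (Γ : U → Y → Mat n →ₗ[ℂ] Mat n)
    (R : U → Mat n → Mat n) (u : U) (y : Y) (ωh : Mat n) : ℝ :=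
  trR (Γ u y (R u ωh)) / trR (R u ωh)

/-- The unnormalized conditional state
`Λ_{Γ,R}(u,y)ωh = Γ_R(u,y)ωh / p_R(y|u,ωh)` (equal to `0` when `p_R(y|u,ωh) = 0`). -/
def lamR {n : ℕ} {U Y : Type*} (Γ : U → Y → Mat n →ₗ[ℂ] Mat n)
    (R : U → Mat n → Mat n) (u : U) (y : Y) (ωh : Mat n) : Mat n :=
  (pR Γ R u y ωh)⁻¹ • Γ u y (R u ωh)

/-- The cost functional `G`: `G(ωh) = tr(F ωh)` when no outcomes remain, and otherwise
`G_j(ωh) = G_{j+1}(Γ(u_j,y_{j+1}) R(u_j) ωh)`, with controls `u_j = K(record so far)`. -/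
def Gcost {n : ℕ} {U Y : Type*} (Γ : U → Y → Mat n →ₗ[ℂ] Mat n)
    (R : U → Mat n → Mat n) (F : Mat n) (K : List Y → U) :
    List Y → Mat n → List Y → ℝ
  | _, ωh, [] => trR (F * ωh)
  | rec, ωh, y :: ys =>
      Gcost Γ R F K (rec ++ [y]) (Γ (K rec) y (R (K rec) ωh)) ys

/-- `∏_k p_R(y_{k+1}|u_k, ωh_k)` along the record `ys`, with the unnormalized
conditional dynamics `ωh_{k+1} = Λ_{Γ,R}(u_k,y_{k+1}) ωh_k`. -/
def prodPR {n : ℕ} {U Y : Type*} (Γ : U → Y → Mat n →ₗ[ℂ] Mat n)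
    (R : U → Mat n → Mat n) (K : List Y → U) : Mat n → List Y → List Y → ℝ
  | _, _, [] => 1
  | ωh, rec, y :: ys =>
      pR Γ R (K rec) y ωh * prodPR Γ R K (lamR Γ R (K rec) y ωh) (rec ++ [y]) ys

/-- The terminal state of the unnormalized conditional dynamics
`ωh_{k+1} = Λ_{Γ,R}(u_k,y_{k+1}) ωh_k` along the record `ys`. -/
def trajR {n : ℕ} {U Y : Type*} (Γ : U → Y → Mat n →ₗ[ℂ] Mat n)
    (R : U → Mat n → Mat n) (K : List Y → U) : Mat n → List Y → List Y → Mat n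
  | ωh, _, [] => ωh
  | ωh, rec, y :: ys => trajR Γ R K (lamR Γ R (K rec) y ωh) (rec ++ [y]) ys

-- auxiliary lemmas

lemma trR_conjTranspose_mul_self {n : ℕ} (B : Mat n) :
    trR (Bᴴ * B) = ∑ i, ∑ j, Complex.normSq (B j i) := by
  simp only [trR, Matrix.trace, Matrix.diag, Matrix.mul_apply, Matrix.conjTranspose_apply]
  rw [Complex.re_sum]
  refine Finset.sum_congr rfl fun i _ => ?_
  rw [Complex.re_sum]
  refine Finset.sum_congr rfl fun j _ => ?_
  simp [Complex.normSq_apply, Complex.mul_re]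

lemma trR_nonneg {n : ℕ} {A : Mat n} (h : A.PosSemidef) : 0 ≤ trR A := by
  obtain ⟨B, rfl⟩ : ∃ B : Mat n, A = Bᴴ * B := by
    open scoped MatrixOrder in
    exact CStarAlgebra.nonneg_iff_eq_star_mul_self.mp h.nonneg
  rw [trR_conjTranspose_mul_self]
  exact Finset.sum_nonneg fun i _ => Finset.sum_nonneg fun j _ => Complex.normSq_nonneg _

lemma eq_zero_of_trR_eq_zero {n : ℕ} {A : Mat n} (h : A.PosSemidef) (h0 : trR A = 0) :
    A = 0 := by
  obtain ⟨B, rfl⟩ : ∃ B : Mat n, A = Bᴴ * B := by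
    open scoped MatrixOrder in
    exact CStarAlgebra.nonneg_iff_eq_star_mul_self.mp h.nonneg
  rw [trR_conjTranspose_mul_self] at h0
  have hB : B = 0 := by
    ext j i
    have := (Finset.sum_eq_zero_iff_of_nonneg (fun i _ => Finset.sum_nonneg
      (fun j _ => Complex.normSq_nonneg _))).mp h0 i (Finset.mem_univ i)
    have := (Finset.sum_eq_zero_iff_of_nonneg (fun j _ => Complex.normSq_nonneg _)).mp
      this j (Finset.mem_univ j)
    simpa using Complex.normSq_eq_zero.mp this
  simp [hB]

lemma trR_smul {n : ℕ} (c : ℝ) (A : Mat n) : trR (c • A) = c * trR A := by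
  simp [trR, Matrix.trace_smul, Complex.smul_re]

lemma mapRealSmul {n : ℕ} (T : Mat n →ₗ[ℂ] Mat n) (c : ℝ) (x : Mat n) :
    T (c • x) = c • T x := by
  have h : c • x = (c : ℂ) • x := by
    ext i j; simp [Matrix.smul_apply, Complex.real_smul]
  have h' : c • T x = (c : ℂ) • T x := by
    ext i j; simp [Matrix.smul_apply, Complex.real_smul]
  rw [h, h']; exact T.map_smul _ _

section main
variable {n : ℕ} {U Y : Type*}
variable (Γ : U → Y → Mat n →ₗ[ℂ] Mat n) (R : U → Mat n → Mat n) (K : List Y → U)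

lemma R_zero (hRhom : ∀ (u : U) (r : ℝ) (ωh : Mat n), R u (r • ωh) = r • R u ωh) (u : U) :
    R u 0 = 0 := by
  have := hRhom u 0 0
  simpa using this

lemma lamR_zero (hRhom : ∀ (u : U) (r : ℝ) (ωh : Mat n), R u (r • ωh) = r • R u ωh)
    (u : U) (y : Y) : lamR Γ R u y 0 = 0 := by
  simp [lamR, R_zero R hRhom]

lemma trajR_zero (hRhom : ∀ (u : U) (r : ℝ) (ωh : Mat n), R u (r • ωh) = r • R u ωh) :
    ∀ (ys rec : List Y), trajR Γ R K 0 rec ys = 0 := by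
  intro ys
  induction ys with
  | nil => intro rec; rfl
  | cons y ys ih => intro rec; simp [trajR, lamR_zero Γ R hRhom, ih]

lemma pR_smul (hRhom : ∀ (u : U) (r : ℝ) (ωh : Mat n), R u (r • ωh) = r • R u ωh) (u : U) (y : Y) {c : ℝ} (hc : 0 < c) (ω : Mat n) :
    pR Γ R u y (c • ω) = pR Γ R u y ω := by
  unfold pR
  rw [hRhom, mapRealSmul, trR_smul, trR_smul, mul_div_mul_left _ _ hc.ne']

lemma lamR_smul (hRhom : ∀ (u : U) (r : ℝ) (ωh : Mat n), R u (r • ωh) = r • R u ωh) (u : U) (y : Y) {c : ℝ} (hc : 0 < c) (ω : Mat n) :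
    lamR Γ R u y (c • ω) = c • lamR Γ R u y ω := by
  unfold lamR
  rw [pR_smul Γ R hRhom u y hc ω, hRhom, mapRealSmul, smul_comm]

lemma prodPR_traj_smul (hRhom : ∀ (u : U) (r : ℝ) (ωh : Mat n), R u (r • ωh) = r • R u ωh) :
    ∀ (ys : List Y) (ω : Mat n) (rec : List Y) {c : ℝ} (hc : 0 < c),
      prodPR Γ R K (c • ω) rec ys = prodPR Γ R K ω rec ys ∧
      trajR Γ R K (c • ω) rec ys = c • trajR Γ R K ω rec ys := by
  intro ys
  induction ys with
  | nil => intro ω rec c hc; exact ⟨rfl, rfl⟩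
  | cons y ys ih =>
      intro ω rec c hc
      constructor
      · simp only [prodPR, pR_smul Γ R hRhom _ y hc, lamR_smul Γ R hRhom _ y hc]
        rw [(ih _ _ hc).1]
      · simp only [trajR, lamR_smul Γ R hRhom _ y hc]
        rw [(ih _ _ hc).2]

lemma key (hRhom : ∀ (u : U) (r : ℝ) (ωh : Mat n), R u (r • ωh) = r • R u ωh) (hPSD : ∀ (u : U) (y : Y) (ω : Mat n), ω.PosSemidef → (Γ u y ω).PosSemidef)
    (hRPSD : ∀ (u : U) (ωh : Mat n), ωh.PosSemidef → (R u ωh).PosSemidef)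
    (F : Mat n) :
    ∀ (ys : List Y) (ω : Mat n), ω.PosSemidef → ∀ (rec : List Y),
      Gcost Γ R F K rec ω ys = prodPR Γ R K ω rec ys * trR (F * trajR Γ R K ω rec ys) := by
  intro ys
  induction ys with
  | nil => intro ω _ rec; simp [Gcost, prodPR, trajR]
  | cons y ys ih =>
      intro ω hω rec
      set u := K rec with hu
      set ω' := Γ u y (R u ω) with hω'
      have hω'psd : ω'.PosSemidef := hPSD _ _ _ (hRPSD _ _ hω)
      have hgc : Gcost Γ R F K rec ω (y :: ys) = Gcost Γ R F K (rec ++ [y]) ω' ys := rfl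
      rw [hgc, ih ω' hω'psd (rec ++ [y])]
      show _ = (pR Γ R u y ω * prodPR Γ R K (lamR Γ R u y ω) (rec ++ [y]) ys) *
        trR (F * trajR Γ R K (lamR Γ R u y ω) (rec ++ [y]) ys)
      by_cases hp : pR Γ R u y ω = 0
      · -- ω' = 0
        have hω'0 : ω' = 0 := by
          rcases div_eq_zero_iff.mp hp with h1 | h2
          · exact eq_zero_of_trR_eq_zero hω'psd h1
          · have : R u ω = 0 := eq_zero_of_trR_eq_zero (hRPSD _ _ hω) h2
            rw [hω', this, map_zero]
        rw [hω'0, hp, zero_mul, zero_mul, trajR_zero Γ R K hRhom ys (rec ++ [y])]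
        simp [trR]
      · have hpnn : 0 ≤ pR Γ R u y ω :=
          div_nonneg (trR_nonneg hω'psd) (trR_nonneg (hRPSD _ _ hω))
        have hppos : 0 < pR Γ R u y ω := lt_of_le_of_ne hpnn (Ne.symm hp)
        have hcpos : 0 < (pR Γ R u y ω)⁻¹ := inv_pos.mpr hppos
        have hlam : lamR Γ R u y ω = (pR Γ R u y ω)⁻¹ • ω' := rfl
        rw [hlam, (prodPR_traj_smul Γ R K hRhom ys ω' (rec ++ [y]) hcpos).1,
          (prodPR_traj_smul Γ R K hRhom ys ω' (rec ++ [y]) hcpos).2,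
          Matrix.mul_smul, trR_smul]
        field_simp

end main


/-- Lemma 1 of the paper: the multiplicative cost
`J^μ_{ωh,0}(K) = ∑ G_0` equals the expectation `E[⟨ωh_M, F⟩]` of the terminal pairing
along the unnormalized conditional dynamics. -/
theorem multiplicative_cost_alternate_expression
    {n : ℕ} {U Y : Type*} [Fintype U] [Nonempty U] [Fintype Y] [Nonempty Y]
    (Γ : U → Y → Mat n →ₗ[ℂ] Mat n)
    (hPSD : ∀ (u : U) (y : Y) (ω : Mat n), ω.PosSemidef → (Γ u y ω).PosSemidef)
    (hNorm : ∀ (u : U) (ω : Mat n), ∑ y : Y, (Γ u y ω).trace = ω.trace)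
    (R : U → Mat n → Mat n)
    (hRPSD : ∀ (u : U) (ωh : Mat n), ωh.PosSemidef → (R u ωh).PosSemidef)
    (hRhom : ∀ (u : U) (r : ℝ) (ωh : Mat n), R u (r • ωh) = r • R u ωh)
    (F : Mat n) (hF : F.IsHermitian)
    (M : ℕ) (hM : 1 ≤ M)
    (K : List Y → U) (ωh : Mat n) (hωh : ωh.PosSemidef) :
    ∑ ys : Fin M → Y, Gcost Γ R F K [] ωh (List.ofFn ys)
      = ∑ ys : Fin M → Y,
          prodPR Γ R K ωh [] (List.ofFn ys) * trR (F * trajR Γ R K ωh [] (List.ofFn ys)) := by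
  exact Finset.sum_congr rfl fun ys _ =>
    key Γ R K hRhom hPSD hRPSD F (List.ofFn ys) ωh hωh []
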